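/- arXiv:1604.04013 — 5 statements merged into one kernel-verified Lean document; each statement's English description precedes it below -/
import Mathlib

section
/- Let P₀ be a d×d row-stochastic matrix with invariant probability row vector π₀ satisfying ‖P₀ⁿ − 𝟙⊗π₀‖ ≤ κ₀ ρⁿ for all n ≥ 0 (κ₀ < ∞, ρ ∈ (0,1), ‖·‖ a fixed submultiplicative matrix norm), put A = P₀ᵀ, and let ℰ be a d×d matrix with ℰ𝟙 = 0. Then there exists a constant C′ < ∞, depending only on d, κ₀, ρ, ‖ℰ‖ and a constant C < ∞, such that the following holds: for every ε ∈ (0,1], every t ≥ 0, every sequence of real numbers ζ₀,…,ζ_t with |ζ_i| ≤ ε, and every sequence of d×d matrices A₀,…,A_t, each the transpose of a row-stochastic matrix, of the form A_i = A + ζ_i ℰᵀ + F_i with ‖F_i‖ ≤ C ε², the product Ω_t = A_t A_{t−1} ⋯ A₀ satisfies ‖Ω_t − A^{t+1} − Σ_{i=0}^{t} ζ_i A^{t−i} ℰᵀ Aⁱ‖ ≤ C′ ε². -/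
attribute [local instance] Matrix.linftyOpNormedRing Matrix.linftyOpNormedAlgebra

open scoped NNReal

namespace Stmt4Aux

variable {d : ℕ}

lemma norm_le_of_row_sums {M : Matrix (Fin d) (Fin d) ℝ} {c : ℝ} (hc : 0 ≤ c)
    (h : ∀ i, ∑ j, |M i j| ≤ c) : ‖M‖ ≤ c := by
  rw [Matrix.linfty_opNorm_def]
  have key : (Finset.univ.sup fun i : Fin d => ∑ j, ‖M i j‖₊) ≤ ⟨c, hc⟩ := by
    refine Finset.sup_le fun i _ => ?_
    refine NNReal.coe_le_coe.mp ?_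
    push_cast
    show _ ≤ c
    simpa [Real.norm_eq_abs] using h i
  exact_mod_cast key

lemma abs_entry_le_norm (M : Matrix (Fin d) (Fin d) ℝ) (i j : Fin d) : |M i j| ≤ ‖M‖ := by
  rw [Matrix.linfty_opNorm_def]
  have h1 : (‖M i j‖₊ : ℝ≥0) ≤ ∑ k, ‖M i k‖₊ :=
    Finset.single_le_sum (f := fun k => ‖M i k‖₊) (fun k _ => zero_le) (Finset.mem_univ j)
  have h2 : (∑ k, ‖M i k‖₊) ≤ Finset.univ.sup fun i : Fin d => ∑ j, ‖M i j‖₊ :=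
    Finset.le_sup (f := fun i => ∑ j : Fin d, ‖M i j‖₊) (Finset.mem_univ i)
  calc |M i j| = ((‖M i j‖₊ : ℝ≥0) : ℝ) := by simp [Real.norm_eq_abs]
    _ ≤ _ := by exact_mod_cast h1.trans h2

lemma norm_transpose_le (M : Matrix (Fin d) (Fin d) ℝ) : ‖M.transpose‖ ≤ d * ‖M‖ := by
  refine norm_le_of_row_sums (by positivity) fun i => ?_
  calc ∑ j, |M.transpose i j| ≤ ∑ _j : Fin d, ‖M‖ :=
        Finset.sum_le_sum fun j _ => abs_entry_le_norm M j i
    _ = d * ‖M‖ := by simp [Finset.sum_const, mul_comm]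

/-- column-stochastic matrices -/
def Good (M : Matrix (Fin d) (Fin d) ℝ) : Prop :=
  (∀ a b, 0 ≤ M a b) ∧ (∀ b, ∑ a, M a b = 1)

lemma Good.one : Good (1 : Matrix (Fin d) (Fin d) ℝ) := by
  constructor
  · intro a b
    by_cases h : a = b <;> simp [Matrix.one_apply, h]
  · intro b
    simp [Matrix.one_apply]

lemma Good.mul {M N : Matrix (Fin d) (Fin d) ℝ} (hM : Good M) (hN : Good N) : Good (M * N) := by
  constructor
  · intro a b
    rw [Matrix.mul_apply]
    exact Finset.sum_nonneg fun c _ => mul_nonneg (hM.1 a c) (hN.1 c b)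
  · intro b
    simp only [Matrix.mul_apply]
    rw [Finset.sum_comm]
    simp [← Finset.sum_mul, hM.2, hN.2]

lemma Good.norm_le {M : Matrix (Fin d) (Fin d) ℝ} (hM : Good M) : ‖M‖ ≤ d := by
  refine norm_le_of_row_sums (by positivity) fun i => ?_
  have hentry : ∀ j, M i j ≤ 1 := by
    intro j
    calc M i j ≤ ∑ a, M a j := Finset.single_le_sum (fun a _ => hM.1 a j) (Finset.mem_univ i)
      _ = 1 := hM.2 j
  calc ∑ j, |M i j| ≤ ∑ _j : Fin d, (1:ℝ) :=
        Finset.sum_le_sum fun j _ => by rw [abs_of_nonneg (hM.1 i j)]; exact hentry j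
    _ = d := by simp

lemma zcs_mul {M N : Matrix (Fin d) (Fin d) ℝ} (hM : ∀ b, ∑ a, M a b = 0) :
    ∀ b, ∑ a, (M * N) a b = 0 := by
  intro b
  simp only [Matrix.mul_apply]
  rw [Finset.sum_comm]
  simp [← Finset.sum_mul, hM]

end Stmt4Aux

/-- Quantitative form of the first-order product expansion: if `A_i = A + ζ_i ℰᵀ + F_i`
with `‖F_i‖ ≤ C ε²`, each `A_i` the transpose of a row-stochastic matrix, `|ζ_i| ≤ ε`,
and the powers of `P₀` converge geometrically to `𝟙⊗π₀`, then
`‖A_t⋯A₀ − A^{t+1} − Σ_{i=0}^t ζ_i A^{t−i} ℰᵀ Aⁱ‖ ≤ C′ ε²` uniformly in `t` and `ε ∈ (0,1]`. -/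
theorem stmt4 (d : ℕ) (P₀ : Matrix (Fin d) (Fin d) ℝ)
    (π₀ : Fin d → ℝ)
    (hP_nonneg : ∀ i j, 0 ≤ P₀ i j)
    (hP_rows : ∀ i, ∑ j, P₀ i j = 1)
    (hπ_nonneg : ∀ j, 0 ≤ π₀ j)
    (hπ_sum : ∑ j, π₀ j = 1)
    (hπ_inv : Matrix.vecMul π₀ P₀ = π₀)
    (J : Matrix (Fin d) (Fin d) ℝ) (hJ : ∀ i j, J i j = π₀ j)
    (κ₀ : ℝ) (ρ : ℝ) (hρ : ρ ∈ Set.Ioo (0 : ℝ) 1)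
    (hgeo : ∀ n : ℕ, ‖P₀ ^ n - J‖ ≤ κ₀ * ρ ^ n)
    (A : Matrix (Fin d) (Fin d) ℝ) (hA : A = P₀.transpose)
    (E : Matrix (Fin d) (Fin d) ℝ) (hE : ∀ i, ∑ j, E i j = 0)
    (C : ℝ) :
    ∃ C' : ℝ, ∀ ε : ℝ, ε ∈ Set.Ioc (0 : ℝ) 1 → ∀ t : ℕ,
      ∀ ζ : ℕ → ℝ, (∀ i ≤ t, |ζ i| ≤ ε) →
      ∀ Aseq : ℕ → Matrix (Fin d) (Fin d) ℝ,
        (∀ i ≤ t, (∀ a b, 0 ≤ (Aseq i).transpose a b) ∧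
          (∀ a, ∑ b, (Aseq i).transpose a b = 1)) →
        (∀ i ≤ t, ‖Aseq i - (A + ζ i • E.transpose)‖ ≤ C * ε ^ 2) →
        ‖((List.range (t + 1)).reverse.map Aseq).prod - A ^ (t + 1) -
            ∑ i ∈ Finset.range (t + 1), ζ i • (A ^ (t - i) * E.transpose * A ^ i)‖
          ≤ C' * ε ^ 2 := by
  classical
  obtain ⟨hρ0, hρ1⟩ := hρ
  have h1ρ : (0:ℝ) < 1 - ρ := by linarith
  have hinv : (0:ℝ) < 1 / (1 - ρ) := div_pos one_pos h1ρ
  have hκ : 0 ≤ κ₀ := by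
    have h0 := hgeo 0
    have h1 := norm_nonneg (P₀ ^ 0 - J)
    nlinarith
  have hdnn : (0:ℝ) ≤ (d:ℝ) := Nat.cast_nonneg d
  set ET := E.transpose with hET
  set δc : ℝ := |C| + ‖ET‖ with hδc
  have hδc0 : 0 ≤ δc := by positivity
  set K1 : ℝ := d * κ₀ * (δc * d) * (1 / (1 - ρ)) with hK1
  have hK10 : 0 ≤ K1 :=
    mul_nonneg (mul_nonneg (mul_nonneg hdnn hκ) (mul_nonneg hδc0 hdnn)) hinv.le
  set K2 : ℝ := ‖ET‖ * K1 + |C| * d with hK2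
  have hK20 : 0 ≤ K2 :=
    add_nonneg (mul_nonneg (norm_nonneg _) hK10) (mul_nonneg (abs_nonneg _) hdnn)
  refine ⟨d * κ₀ * K2 * (1 / (1 - ρ)), ?_⟩
  rintro ε ⟨hε0, hε1⟩ t ζ hζ Aseq hstoch hF
  have hεsq : ε ^ 2 ≤ ε := by nlinarith
  set Pp : ℕ → Matrix (Fin d) (Fin d) ℝ :=
    fun s => ((List.range s).reverse.map Aseq).prod with hPpdef
  have hPp0 : Pp 0 = 1 := by simp [hPpdef]
  have hPps : ∀ s, Pp (s + 1) = Aseq s * Pp s := by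
    intro s
    simp [hPpdef, List.range_succ]
  -- facts about A
  have hApow : ∀ m : ℕ, A ^ m = (P₀ ^ m).transpose := by
    intro m; rw [hA, Matrix.transpose_pow]
  have hAgood : ∀ m : ℕ, Stmt4Aux.Good (A ^ m) := by
    intro m
    induction m with
    | zero => simpa using Stmt4Aux.Good.one
    | succ m ih =>
      rw [pow_succ']
      refine Stmt4Aux.Good.mul ?_ ih
      constructor
      · intro a b; rw [hA]; exact hP_nonneg b a
      · intro b; rw [hA]; simpa using hP_rows b
  have hAone : Stmt4Aux.Good A := by simpa using hAgood 1
  have hnormApow : ∀ m : ℕ, ‖A ^ m‖ ≤ d := fun m => (hAgood m).norm_le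
  have hPpgood : ∀ s, s ≤ t + 1 → Stmt4Aux.Good (Pp s) := by
    intro s
    induction s with
    | zero => intro _; rw [hPp0]; exact Stmt4Aux.Good.one
    | succ s ih =>
      intro hs
      rw [hPps]
      have hst : s ≤ t := by omega
      have h := hstoch s hst
      exact Stmt4Aux.Good.mul ⟨fun a b => h.1 b a, fun b => h.2 b⟩ (ih (by omega))
  have hnormPp : ∀ s, s ≤ t + 1 → ‖Pp s‖ ≤ d := fun s hs => (hPpgood s hs).norm_le
  -- zero column sums facts
  have hzET : ∀ b, ∑ a, ET a b = 0 := by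
    intro b; simpa [hET, Matrix.transpose_apply] using hE b
  have hAseqcol : ∀ i, i ≤ t → ∀ b, ∑ a, Aseq i a b = 1 := by
    intro i hi b
    simpa [Matrix.transpose_apply] using (hstoch i hi).2 b
  have hzD : ∀ i, i ≤ t → ∀ b, ∑ a, (Aseq i - A) a b = 0 := by
    intro i hi b
    simp only [Matrix.sub_apply, Finset.sum_sub_distrib]
    rw [hAseqcol i hi b, hAone.2 b, sub_self]
  have hzF : ∀ i, i ≤ t → ∀ b, ∑ a, (Aseq i - (A + ζ i • ET)) a b = 0 := by
    intro i hi b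
    simp only [Matrix.sub_apply, Matrix.add_apply, Matrix.smul_apply, smul_eq_mul,
      Finset.sum_sub_distrib, Finset.sum_add_distrib, ← Finset.mul_sum]
    rw [hAseqcol i hi b, hAone.2 b, hzET b, mul_zero, add_zero, sub_self]
  -- contraction on zero-column-sum matrices
  have hcontr : ∀ (m : ℕ) (M : Matrix (Fin d) (Fin d) ℝ), (∀ b, ∑ a, M a b = 0) →
      ‖A ^ m * M‖ ≤ d * κ₀ * ρ ^ m * ‖M‖ := by
    intro m M hM
    have hJT : J.transpose * M = 0 := by
      ext a b
      simp only [Matrix.mul_apply, Matrix.transpose_apply, Matrix.zero_apply, hJ]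
      rw [← Finset.mul_sum, hM b, mul_zero]
    have heq : A ^ m * M = (A ^ m - J.transpose) * M := by
      rw [sub_mul, hJT, sub_zero]
    rw [heq]
    calc ‖(A ^ m - J.transpose) * M‖ ≤ ‖A ^ m - J.transpose‖ * ‖M‖ := norm_mul_le _ _
      _ ≤ d * (κ₀ * ρ ^ m) * ‖M‖ := by
          refine mul_le_mul_of_nonneg_right ?_ (norm_nonneg M)
          have ht : A ^ m - J.transpose = (P₀ ^ m - J).transpose := by
            rw [hApow, Matrix.transpose_sub]
          rw [ht]
          calc ‖(P₀ ^ m - J).transpose‖ ≤ d * ‖P₀ ^ m - J‖ := Stmt4Aux.norm_transpose_le _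
            _ ≤ d * (κ₀ * ρ ^ m) := mul_le_mul_of_nonneg_left (hgeo m) hdnn
      _ = d * κ₀ * ρ ^ m * ‖M‖ := by ring
  -- geometric sum bound
  have hgeosum : ∀ s : ℕ, ∑ i ∈ Finset.range s, ρ ^ (s - 1 - i) ≤ 1 / (1 - ρ) := by
    intro s
    rw [Finset.sum_range_reflect (fun i => ρ ^ i) s]
    rw [geom_sum_eq (by linarith : ρ ≠ 1) s]
    rw [show (ρ ^ s - 1) / (ρ - 1) = (1 - ρ ^ s) / (1 - ρ) by
      rw [← neg_div_neg_eq]; ring_nf]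
    have hpow : (0:ℝ) ≤ ρ ^ s := by positivity
    gcongr
    linarith
  -- first telescoping identity
  have hI1 : ∀ s : ℕ, Pp s - A ^ s =
      ∑ i ∈ Finset.range s, A ^ (s - 1 - i) * ((Aseq i - A) * Pp i) := by
    intro s
    induction s with
    | zero => simp [hPp0]
    | succ s ih =>
      rw [hPps, Finset.sum_range_succ]
      have hcongr : ∀ i ∈ Finset.range s,
          A ^ (s + 1 - 1 - i) * ((Aseq i - A) * Pp i)
            = A * (A ^ (s - 1 - i) * ((Aseq i - A) * Pp i)) := by
        intro i hi
        have hi' : i < s := Finset.mem_range.mp hi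
        rw [show s + 1 - 1 - i = (s - 1 - i) + 1 by omega, pow_succ', mul_assoc]
      rw [Finset.sum_congr rfl hcongr, ← Finset.mul_sum, ← ih,
        show s + 1 - 1 - s = 0 by omega, pow_zero, one_mul]
      rw [mul_sub, sub_mul, pow_succ']
      abel
  -- bound on single-step perturbation
  have hDbound : ∀ i, i ≤ t → ‖Aseq i - A‖ ≤ δc * ε := by
    intro i hi
    have h1 : Aseq i - A = (Aseq i - (A + ζ i • ET)) + ζ i • ET := by abel
    rw [h1]
    calc ‖(Aseq i - (A + ζ i • ET)) + ζ i • ET‖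
        ≤ ‖Aseq i - (A + ζ i • ET)‖ + ‖ζ i • ET‖ := norm_add_le _ _
      _ ≤ C * ε ^ 2 + |ζ i| * ‖ET‖ := by
          refine add_le_add (hF i hi) (le_of_eq ?_)
          rw [norm_smul, Real.norm_eq_abs]
      _ ≤ δc * ε := by
          rw [hδc]
          have hζi := hζ i hi
          have hCabs := le_abs_self C
          have haζ := abs_nonneg (ζ i)
          have hnET := norm_nonneg ET
          nlinarith [abs_nonneg C]
  -- first-order closeness of the product to the power
  have hclose : ∀ s, s ≤ t + 1 → ‖Pp s - A ^ s‖ ≤ K1 * ε := by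
    intro s hs
    rw [hI1 s]
    have hfac : (0:ℝ) ≤ d * κ₀ * (δc * ε * d) :=
      mul_nonneg (mul_nonneg hdnn hκ) (mul_nonneg (mul_nonneg hδc0 hε0.le) hdnn)
    calc ‖∑ i ∈ Finset.range s, A ^ (s - 1 - i) * ((Aseq i - A) * Pp i)‖
        ≤ ∑ i ∈ Finset.range s, ‖A ^ (s - 1 - i) * ((Aseq i - A) * Pp i)‖ :=
          norm_sum_le _ _
      _ ≤ ∑ i ∈ Finset.range s, d * κ₀ * (δc * ε * d) * ρ ^ (s - 1 - i) := by
          refine Finset.sum_le_sum fun i hi => ?_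
          have hit : i ≤ t := by
            have := Finset.mem_range.mp hi; omega
          calc ‖A ^ (s - 1 - i) * ((Aseq i - A) * Pp i)‖
              ≤ d * κ₀ * ρ ^ (s - 1 - i) * ‖(Aseq i - A) * Pp i‖ :=
                hcontr _ _ (Stmt4Aux.zcs_mul (hzD i hit))
            _ ≤ d * κ₀ * ρ ^ (s - 1 - i) * (δc * ε * d) := by
                refine mul_le_mul_of_nonneg_left ?_
                  (mul_nonneg (mul_nonneg hdnn hκ) (by positivity))
                calc ‖(Aseq i - A) * Pp i‖ ≤ ‖Aseq i - A‖ * ‖Pp i‖ := norm_mul_le _ _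
                  _ ≤ (δc * ε) * d :=
                    mul_le_mul (hDbound i hit) (hnormPp i (by omega)) (norm_nonneg _)
                      (mul_nonneg hδc0 hε0.le)
            _ = d * κ₀ * (δc * ε * d) * ρ ^ (s - 1 - i) := by ring
      _ = d * κ₀ * (δc * ε * d) * ∑ i ∈ Finset.range s, ρ ^ (s - 1 - i) := by
          rw [Finset.mul_sum]
      _ ≤ d * κ₀ * (δc * ε * d) * (1 / (1 - ρ)) :=
          mul_le_mul_of_nonneg_left (hgeosum s) hfac
      _ = K1 * ε := by rw [hK1]; ring
  -- second telescoping identity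
  have hI2 : ∀ s : ℕ,
      Pp s - A ^ s - ∑ i ∈ Finset.range s, ζ i • (A ^ (s - 1 - i) * ET * A ^ i)
        = ∑ k ∈ Finset.range s,
            A ^ (s - 1 - k) *
              (ζ k • (ET * (Pp k - A ^ k)) + (Aseq k - (A + ζ k • ET)) * Pp k) := by
    intro s
    induction s with
    | zero => simp [hPp0]
    | succ s ih =>
      rw [hPps, Finset.sum_range_succ, Finset.sum_range_succ]
      have hc1 : ∀ i ∈ Finset.range s,
          ζ i • (A ^ (s + 1 - 1 - i) * ET * A ^ i)
            = A * (ζ i • (A ^ (s - 1 - i) * ET * A ^ i)) := by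
        intro i hi
        have hi' : i < s := Finset.mem_range.mp hi
        rw [mul_smul_comm, show s + 1 - 1 - i = (s - 1 - i) + 1 by omega, pow_succ',
          mul_assoc A (A ^ (s - 1 - i)) ET, mul_assoc A (A ^ (s - 1 - i) * ET) (A ^ i)]
      have hc2 : ∀ k ∈ Finset.range s,
          A ^ (s + 1 - 1 - k) *
              (ζ k • (ET * (Pp k - A ^ k)) + (Aseq k - (A + ζ k • ET)) * Pp k)
            = A * (A ^ (s - 1 - k) *
              (ζ k • (ET * (Pp k - A ^ k)) + (Aseq k - (A + ζ k • ET)) * Pp k)) := by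
        intro k hk
        have hk' : k < s := Finset.mem_range.mp hk
        rw [show s + 1 - 1 - k = (s - 1 - k) + 1 by omega, pow_succ', mul_assoc]
      rw [Finset.sum_congr rfl hc1, Finset.sum_congr rfl hc2, ← Finset.mul_sum,
        ← Finset.mul_sum, ← ih, show s + 1 - 1 - s = 0 by omega, pow_zero, one_mul, one_mul]
      simp only [pow_succ', mul_sub, sub_mul, add_mul, smul_sub, mul_add, smul_mul_assoc,
        mul_smul_comm]
      abel
  -- bound on the G terms
  have hGbound : ∀ k, k ≤ t →
      ‖ζ k • (ET * (Pp k - A ^ k)) + (Aseq k - (A + ζ k • ET)) * Pp k‖ ≤ K2 * ε ^ 2 := by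
    intro k hk
    calc ‖ζ k • (ET * (Pp k - A ^ k)) + (Aseq k - (A + ζ k • ET)) * Pp k‖
        ≤ |ζ k| * ‖ET * (Pp k - A ^ k)‖ + ‖(Aseq k - (A + ζ k • ET)) * Pp k‖ := by
          refine le_trans (norm_add_le _ _) (add_le_add (le_of_eq ?_) le_rfl)
          rw [norm_smul, Real.norm_eq_abs]
      _ ≤ ε * (‖ET‖ * (K1 * ε)) + (C * ε ^ 2) * d := by
          refine add_le_add ?_ ?_
          · refine mul_le_mul (hζ k hk) ?_ (norm_nonneg _) hε0.le
            exact le_trans (norm_mul_le _ _)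
              (mul_le_mul_of_nonneg_left (hclose k (by omega)) (norm_nonneg ET))
          · exact le_trans (norm_mul_le _ _)
              (mul_le_mul (hF k hk) (hnormPp k (by omega)) (norm_nonneg _)
                (le_trans (norm_nonneg _) (hF k hk)))
      _ ≤ K2 * ε ^ 2 := by
          rw [hK2]
          have hC := le_abs_self C
          nlinarith [mul_nonneg (mul_nonneg (sub_nonneg.2 hC) (sq_nonneg ε)) hdnn]
  have hzG : ∀ k, k ≤ t → ∀ b,
      ∑ a, (ζ k • (ET * (Pp k - A ^ k)) + (Aseq k - (A + ζ k • ET)) * Pp k) a b = 0 := by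
    intro k hk b
    simp only [Matrix.add_apply, Matrix.smul_apply, smul_eq_mul, Finset.sum_add_distrib,
      ← Finset.mul_sum]
    rw [Stmt4Aux.zcs_mul hzET b, Stmt4Aux.zcs_mul (hzF k hk) b, mul_zero, add_zero]
  -- conclusion
  have key := hI2 (t + 1)
  simp only [Nat.add_sub_cancel] at key
  have hgoalPp : ((List.range (t + 1)).reverse.map Aseq).prod = Pp (t + 1) := rfl
  rw [hgoalPp, key]
  have hgs := hgeosum (t + 1)
  simp only [Nat.add_sub_cancel] at hgs
  have hfac2 : (0:ℝ) ≤ d * κ₀ * (K2 * ε ^ 2) :=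
    mul_nonneg (mul_nonneg hdnn hκ) (mul_nonneg hK20 (sq_nonneg ε))
  calc ‖∑ k ∈ Finset.range (t + 1), A ^ (t - k) *
          (ζ k • (ET * (Pp k - A ^ k)) + (Aseq k - (A + ζ k • ET)) * Pp k)‖
      ≤ ∑ k ∈ Finset.range (t + 1), ‖A ^ (t - k) *
          (ζ k • (ET * (Pp k - A ^ k)) + (Aseq k - (A + ζ k • ET)) * Pp k)‖ :=
        norm_sum_le _ _
    _ ≤ ∑ k ∈ Finset.range (t + 1), d * κ₀ * (K2 * ε ^ 2) * ρ ^ (t - k) := by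
        refine Finset.sum_le_sum fun k hk => ?_
        have hkt : k ≤ t := by
          have := Finset.mem_range.mp hk; omega
        calc ‖A ^ (t - k) *
              (ζ k • (ET * (Pp k - A ^ k)) + (Aseq k - (A + ζ k • ET)) * Pp k)‖
            ≤ d * κ₀ * ρ ^ (t - k) *
              ‖ζ k • (ET * (Pp k - A ^ k)) + (Aseq k - (A + ζ k • ET)) * Pp k‖ :=
              hcontr _ _ (hzG k hkt)
          _ ≤ d * κ₀ * ρ ^ (t - k) * (K2 * ε ^ 2) := by
              refine mul_le_mul_of_nonneg_left (hGbound k hkt)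
                (mul_nonneg (mul_nonneg hdnn hκ) (by positivity))
          _ = d * κ₀ * (K2 * ε ^ 2) * ρ ^ (t - k) := by ring
    _ = d * κ₀ * (K2 * ε ^ 2) * ∑ k ∈ Finset.range (t + 1), ρ ^ (t - k) := by
        rw [Finset.mul_sum]
    _ ≤ d * κ₀ * (K2 * ε ^ 2) * (1 / (1 - ρ)) :=
        mul_le_mul_of_nonneg_left hgs hfac2
    _ = d * κ₀ * K2 * (1 / (1 - ρ)) * ε ^ 2 := by ring
end

section
/- On a probability space let Γ be a random row vector in ℝ^d taking values in the standard basis vectors with ℙ{Γ = eʲ} = π₀(j) for each j, where π₀ is an invariant probability row vector for a d×d row-stochastic matrix P₀ (π₀P₀ = π₀). Let G be a random d×d matrix with entries in {0,1} and each row summing to 1 such that 𝔼[G | σ(Γ)] = P₀ almost surely. Then Δ := Γ(G − P₀) satisfies 𝔼[ΔᵀΔ] = Π₀ − P₀ᵀ Π₀ P₀, where Π₀ = diag(π₀). -/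
open MeasureTheory

/-- In the stationary case (`Γ ∼ π₀`, `𝔼[G|σ(Γ)] = P₀`), the martingale difference
`Δ = Γ(G − P₀)` has covariance `𝔼[ΔᵀΔ] = Π₀ − P₀ᵀ Π₀ P₀`, where `Π₀ = diag(π₀)`. -/
theorem stmt9 {Ω : Type*} [m0 : MeasurableSpace Ω] (μ : Measure Ω)
    [IsProbabilityMeasure μ] (d : ℕ)
    (P₀ : Matrix (Fin d) (Fin d) ℝ) (π₀ : Fin d → ℝ)
    (hP_nonneg : ∀ i j, 0 ≤ P₀ i j)
    (hP_rows : ∀ i, ∑ j, P₀ i j = 1)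
    (hπ_nonneg : ∀ j, 0 ≤ π₀ j)
    (hπ_sum : ∑ j, π₀ j = 1)
    (hπ_inv : Matrix.vecMul π₀ P₀ = π₀)
    (Γ : Ω → Fin d → ℝ) (hΓ_meas : Measurable Γ)
    (hΓ_basis : ∀ ω, ∃ j : Fin d, Γ ω = Pi.single j 1)
    (hΓ_law : ∀ j : Fin d, μ {ω | Γ ω = Pi.single j 1} = ENNReal.ofReal (π₀ j))
    (G : Ω → Matrix (Fin d) (Fin d) ℝ)
    (hG_meas : ∀ i k, Measurable fun ω => G ω i k)
    (hG01 : ∀ ω i k, G ω i k = 0 ∨ G ω i k = 1)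
    (hGrows : ∀ ω i, ∑ k, G ω i k = 1)
    (hcond : ∀ i k,
      μ[fun ω => G ω i k | MeasurableSpace.comap Γ inferInstance] =ᵐ[μ]
        fun _ => P₀ i k)
    (Δ : Ω → Fin d → ℝ)
    (hΔ : ∀ ω, Δ ω = Matrix.vecMul (Γ ω) (G ω - P₀)) :
    ∀ k l, ∫ ω, Δ ω k * Δ ω l ∂μ =
      (Matrix.diagonal π₀ - P₀.transpose * Matrix.diagonal π₀ * P₀) k l := by
  classical
  intro k l
  have hm : MeasurableSpace.comap Γ (inferInstance : MeasurableSpace (Fin d → ℝ)) ≤ m0 :=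
    hΓ_meas.comap_le
  set A : Fin d → Set Ω := fun j => {ω | Γ ω = Pi.single j 1} with hA_def
  have hA_m : ∀ j,
      MeasurableSet[MeasurableSpace.comap Γ (inferInstance : MeasurableSpace (Fin d → ℝ))]
        (A j) := fun j =>
    ⟨{Pi.single j 1}, measurableSet_singleton _, rfl⟩
  have hA_meas : ∀ j, MeasurableSet[m0] (A j) := fun j => hm _ (hA_m j)
  have hA_vol : ∀ j, (μ (A j)).toReal = π₀ j := by
    intro j
    rw [hA_def]
    simp only []
    rw [hΓ_law j, ENNReal.toReal_ofReal (hπ_nonneg j)]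
  have hG_nonneg : ∀ ω i k', 0 ≤ G ω i k' := by
    intro ω i k'; rcases hG01 ω i k' with h | h <;> simp [h]
  have hG_le : ∀ ω i k', G ω i k' ≤ 1 := by
    intro ω i k'; rcases hG01 ω i k' with h | h <;> simp [h]
  have hG_int : ∀ i k', Integrable (fun ω => G ω i k') μ := by
    intro i k'
    refine ⟨(hG_meas i k').aestronglyMeasurable, ?_⟩
    apply HasFiniteIntegral.of_bounded (C := 1)
    filter_upwards with ω
    rw [Real.norm_eq_abs, abs_of_nonneg (hG_nonneg ω i k')]
    exact hG_le ω i k'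
  -- key set-integral identity
  have key : ∀ j i k', ∫ ω in A j, G ω i k' ∂μ = P₀ i k' * π₀ j := by
    intro j i k'
    have h1 := setIntegral_condExp hm (hG_int i k') (hA_m j)
    have h2 : ∫ ω in A j,
        (μ[fun ω => G ω i k'|MeasurableSpace.comap Γ inferInstance]) ω ∂μ
          = ∫ ω in A j, P₀ i k' ∂μ :=
      setIntegral_congr_ae (hA_meas j) ((hcond i k').mono fun ω hω _ => hω)
    rw [← h1, h2, setIntegral_const, smul_eq_mul, measureReal_def, hA_vol j, mul_comm]
  -- product structure of G entries
  have hGG : ∀ ω j, G ω j k * G ω j l = (if k = l then G ω j k else 0) := by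
    intro ω j
    by_cases hkl : k = l
    · subst hkl; simp only [if_pos rfl]
      rcases hG01 ω j k with h | h <;> simp [h]
    · simp only [if_neg hkl]
      rcases hG01 ω j k with h | h
      · simp [h]
      rcases hG01 ω j l with h' | h'
      · simp [h']
      exfalso
      have hsum := hGrows ω j
      have h2 : G ω j k + G ω j l ≤ ∑ k', G ω j k' :=
        Finset.add_le_sum (fun i _ => hG_nonneg ω j i)
          (Finset.mem_univ k) (Finset.mem_univ l) hkl
      rw [h, h', hsum] at h2
      linarith
  -- pointwise decomposition of Δ
  have hΔA : ∀ ω j, ω ∈ A j → ∀ k', Δ ω k' = G ω j k' - P₀ j k' := by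
    intro ω j hω k'
    have hΓω : Γ ω = Pi.single j 1 := hω
    rw [hΔ ω, hΓω]
    simp [Matrix.vecMul, dotProduct, Pi.single_apply, ite_mul, Finset.sum_ite_eq,
      Matrix.sub_apply]
  -- the integrand functions
  set g : Fin d → Ω → ℝ :=
    fun j ω => (G ω j k - P₀ j k) * (G ω j l - P₀ j l) with hg_def
  have hg_int : ∀ j, Integrable (g j) μ := by
    intro j
    refine ⟨(((hG_meas j k).sub measurable_const).mul
      ((hG_meas j l).sub measurable_const)).aestronglyMeasurable, ?_⟩
    apply HasFiniteIntegral.of_bounded (C := (1 + |P₀ j k|) * (1 + |P₀ j l|))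
    filter_upwards with ω
    rw [hg_def]
    simp only [Real.norm_eq_abs, abs_mul]
    have h1 : |G ω j k - P₀ j k| ≤ 1 + |P₀ j k| := by
      have := abs_sub (G ω j k) (P₀ j k)
      have hk1 : |G ω j k| ≤ 1 := by
        rw [abs_of_nonneg (hG_nonneg ω j k)]; exact hG_le ω j k
      calc |G ω j k - P₀ j k| ≤ |G ω j k| + |P₀ j k| := abs_sub _ _
        _ ≤ 1 + |P₀ j k| := by linarith
    have h2 : |G ω j l - P₀ j l| ≤ 1 + |P₀ j l| := by
      have hk1 : |G ω j l| ≤ 1 := by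
        rw [abs_of_nonneg (hG_nonneg ω j l)]; exact hG_le ω j l
      calc |G ω j l - P₀ j l| ≤ |G ω j l| + |P₀ j l| := abs_sub _ _
        _ ≤ 1 + |P₀ j l| := by linarith
    exact mul_le_mul h1 h2 (abs_nonneg _) (by positivity)
  have hpoint : ∀ ω, Δ ω k * Δ ω l = ∑ j, (A j).indicator (g j) ω := by
    intro ω
    obtain ⟨j0, hj0⟩ := hΓ_basis ω
    have hωA : ω ∈ A j0 := hj0
    have hmem : ∀ j, ω ∈ A j ↔ j = j0 := by
      intro j
      constructor
      · intro hj
        have hj' : Γ ω = Pi.single j 1 := hj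
        have : (Pi.single j 1 : Fin d → ℝ) = Pi.single j0 1 := hj'.symm.trans hj0
        by_contra hne
        have := congrFun this j
        simp [Pi.single_apply, hne] at this
      · rintro rfl; exact hωA
    rw [Finset.sum_eq_single j0]
    · rw [Set.indicator_of_mem hωA, hg_def, hΔA ω j0 hωA k, hΔA ω j0 hωA l]
    · intro j _ hj
      rw [Set.indicator_of_notMem]
      rw [hmem j]; exact hj
    · intro h; exact absurd (Finset.mem_univ j0) h
  have hsplit : ∫ ω, Δ ω k * Δ ω l ∂μ = ∑ j, ∫ ω in A j, g j ω ∂μ := by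
    rw [integral_congr_ae (Filter.Eventually.of_forall hpoint)]
    rw [integral_finset_sum]
    · exact Finset.sum_congr rfl fun j _ => integral_indicator (hA_meas j)
    · exact fun j _ => (hg_int j).indicator (hA_meas j)
  -- compute each set integral
  have hsetint : ∀ j, ∫ ω in A j, g j ω ∂μ =
      (if k = l then P₀ j k * π₀ j else 0) - P₀ j k * P₀ j l * π₀ j := by
    intro j
    have hexp : ∀ ω, g j ω =
        ((if k = l then 1 else 0) - P₀ j l) * G ω j k
          + (- P₀ j k) * G ω j l + P₀ j k * P₀ j l := by
      intro ω
      rw [hg_def]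
      have := hGG ω j
      by_cases hkl : k = l
      · simp only [if_pos hkl] at this ⊢
        nlinarith [this]
      · simp only [if_neg hkl] at this ⊢
        nlinarith [this]
    rw [setIntegral_congr_ae (hA_meas j)
      (Filter.Eventually.of_forall fun ω _ => hexp ω)]
    rw [integral_add, integral_add, integral_const_mul, integral_const_mul,
      setIntegral_const, key j j k, key j j l, smul_eq_mul, measureReal_def, hA_vol j]
    · by_cases hkl : k = l
      · simp only [if_pos hkl]; subst hkl; ring
      · simp only [if_neg hkl]; ring
    · exact (((hG_int j k).restrict (s := A j)).const_mul _)
    · exact (((hG_int j l).restrict (s := A j)).const_mul _)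
    · exact ((((hG_int j k).restrict (s := A j)).const_mul _).add
        (((hG_int j l).restrict (s := A j)).const_mul _))
    · exact integrable_const _
  rw [hsplit, Finset.sum_congr rfl fun j _ => hsetint j]
  -- compute the right-hand side
  have hRHS : (Matrix.diagonal π₀ - P₀.transpose * Matrix.diagonal π₀ * P₀) k l
      = (if k = l then π₀ k else 0) - ∑ j, P₀ j k * π₀ j * P₀ j l := by
    simp [Matrix.sub_apply, Matrix.diagonal_apply, Matrix.mul_apply,
      Matrix.transpose_apply, Finset.sum_mul, Finset.mul_sum,
      Matrix.diagonal, mul_ite, mul_zero, Finset.sum_ite_eq']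
  rw [hRHS, Finset.sum_sub_distrib]
  have hinv : ∑ j, π₀ j * P₀ j k = π₀ k := by
    have := congrFun hπ_inv k
    simpa [Matrix.vecMul, dotProduct] using this
  congr 1
  · by_cases hkl : k = l
    · simp only [if_pos hkl]
      rw [← hinv]
      exact Finset.sum_congr rfl fun j _ => by ring
    · simp [if_neg hkl]
  · exact Finset.sum_congr rfl fun j _ => by ring
end

section
/- Let ψ_a and ψ_b be probability measures on a measurable space (E,ℬ) with ψ_a absolutely continuous with respect to ψ_b, and suppose the Radon–Nikodym derivative g = dψ_a/dψ_b satisfies g ∈ L²(ψ_b). Then for every measurable f: E → ℝ with ∫ f dψ_b = 0, ∫ |f| dψ_a < ∞, and 0 < ∫ f² dψ_b < ∞, one has (∫ f dψ_a)² / ∫ f² dψ_b ≤ ∫ (g − 1)² dψ_b, with equality when f = g − 1 (provided ∫ (g−1)² dψ_b > 0). Consequently the supremum defining D̂(ψ_a‖ψ_b) is attained at f̂* = dψ_a/dψ_b − 1, and D̂(ψ_a‖ψ_b) = ½ ∫ (g − 1)² dψ_b. -/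
open MeasureTheory

private lemma memL2_mul_integrable {E : Type*} [MeasurableSpace E] {μ : Measure E}
    {f h : E → ℝ} (hf : MemLp f 2 μ) (hh : MemLp h 2 μ) :
    Integrable (fun x => f x * h x) μ := by
  have hfs : Integrable (fun x => f x ^ 2) μ := hf.integrable_sq
  have hhs : Integrable (fun x => h x ^ 2) μ := hh.integrable_sq
  refine Integrable.mono' ((hfs.add hhs).div_const 2)
    (hf.aestronglyMeasurable.mul hh.aestronglyMeasurable)
    (Filter.Eventually.of_forall fun x => ?_)
  simp only [Pi.add_apply]
  rw [Real.norm_eq_abs, abs_mul]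
  nlinarith [abs_nonneg (f x), abs_nonneg (h x), sq_abs (f x), sq_abs (h x),
    sq_nonneg (|f x| - |h x|)]

/-- Cauchy–Schwarz characterization of the quadratic divergence: for `g = dψ_a/dψ_b ∈ L²(ψ_b)`,
every admissible `f` satisfies `(ψ_a(f))²/ψ_b(f²) ≤ ψ_b((g−1)²)`, equality holds at
`f = g − 1`, and hence `D̂(ψ_a‖ψ_b) = ½ ψ_b((g−1)²)`. -/
theorem stmt11 {E : Type*} [MeasurableSpace E] (ψa ψb : Measure E)
    [IsProbabilityMeasure ψa] [IsProbabilityMeasure ψb]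
    (hac : ψa ≪ ψb)
    (g : E → ℝ) (hg : g = fun x => (ψa.rnDeriv ψb x).toReal)
    (hgL2 : MemLp g 2 ψb) :
    (∀ f : E → ℝ, Measurable f → ∫ x, f x ∂ψb = 0 → Integrable f ψa →
        MemLp f 2 ψb → 0 < ∫ x, (f x) ^ 2 ∂ψb →
        (∫ x, f x ∂ψa) ^ 2 / ∫ x, (f x) ^ 2 ∂ψb ≤ ∫ x, (g x - 1) ^ 2 ∂ψb) ∧
    (0 < ∫ x, (g x - 1) ^ 2 ∂ψb →
        (∫ x, (g x - 1) ∂ψa) ^ 2 / ∫ x, (g x - 1) ^ 2 ∂ψb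
          = ∫ x, (g x - 1) ^ 2 ∂ψb) ∧
    (1 / 2 : ℝ) * sSup {r : ℝ | ∃ f : E → ℝ, Measurable f ∧
        (∫ x, f x ∂ψb = 0) ∧ Integrable f ψa ∧ MemLp f 2 ψb ∧
        (0 < ∫ x, (f x) ^ 2 ∂ψb) ∧
        r = (∫ x, f x ∂ψa) ^ 2 / ∫ x, (f x) ^ 2 ∂ψb}
      = (1 / 2 : ℝ) * ∫ x, (g x - 1) ^ 2 ∂ψb := by
  -- basic facts
  have hgmeas : Measurable g := by
    rw [hg]; exact (Measure.measurable_rnDeriv ψa ψb).ennreal_toReal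
  set h : E → ℝ := fun x => g x - 1 with hh
  have hhL2 : MemLp h 2 ψb := hgL2.sub (memLp_const 1)
  have hhint : Integrable h ψb := hhL2.integrable one_le_two
  have hgint : Integrable g ψb := hgL2.integrable one_le_two
  have hint_g : ∫ x, g x ∂ψb = 1 := by
    rw [hg, Measure.integral_toReal_rnDeriv hac]
    simp
  have hint_h : ∫ x, h x ∂ψb = 0 := by
    simp only [hh]
    rw [integral_sub hgint (integrable_const 1), hint_g]
    simp
  have hhs : Integrable (fun x => h x ^ 2) ψb := hhL2.integrable_sq
  have I2h_def : ∫ x, h x ^ 2 ∂ψb = ∫ x, (g x - 1) ^ 2 ∂ψb := rfl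
  set I2h : ℝ := ∫ x, h x ^ 2 ∂ψb with hI2h
  have hI2h_nonneg : 0 ≤ I2h := integral_nonneg fun x => sq_nonneg _
  -- change of measure
  have key : ∀ f : E → ℝ, ∫ x, f x ∂ψa = ∫ x, g x * f x ∂ψb := by
    intro f
    rw [← integral_rnDeriv_smul hac]
    simp [hg, smul_eq_mul]
  -- part 1
  have part1 : ∀ f : E → ℝ, Measurable f → ∫ x, f x ∂ψb = 0 → Integrable f ψa →
      MemLp f 2 ψb → 0 < ∫ x, (f x) ^ 2 ∂ψb →
      (∫ x, f x ∂ψa) ^ 2 / ∫ x, (f x) ^ 2 ∂ψb ≤ I2h := by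
    intro f _ hf0 _ hfL2 hfpos
    have hfint : Integrable f ψb := hfL2.integrable one_le_two
    have hfh : Integrable (fun x => f x * h x) ψb := memL2_mul_integrable hfL2 hhL2
    have hfg : Integrable (fun x => g x * f x) ψb := memL2_mul_integrable hgL2 hfL2
    have hfs : Integrable (fun x => f x ^ 2) ψb := hfL2.integrable_sq
    set I2f : ℝ := ∫ x, f x ^ 2 ∂ψb with hI2f
    set Ifh : ℝ := ∫ x, f x * h x ∂ψb with hIfh
    -- ∫ f dψa = Ifh
    have hfa : ∫ x, f x ∂ψa = Ifh := by
      rw [key f, hIfh]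
      have : ∀ x, g x * f x = f x * h x + f x := by
        intro x; simp only [hh]; ring
      simp_rw [this]
      rw [integral_add hfh hfint, hf0, add_zero]
    -- Cauchy-Schwarz by discriminant
    have hcs : Ifh ^ 2 ≤ I2f * I2h := by
      have hexp : 0 ≤ ∫ x, (I2f * h x - Ifh * f x) ^ 2 ∂ψb :=
        integral_nonneg fun x => sq_nonneg _
      have hsplit : ∫ x, (I2f * h x - Ifh * f x) ^ 2 ∂ψb
          = I2f ^ 2 * I2h - 2 * I2f * Ifh * Ifh + Ifh ^ 2 * I2f := by
        have : ∀ x, (I2f * h x - Ifh * f x) ^ 2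
            = I2f ^ 2 * h x ^ 2 - 2 * I2f * Ifh * (f x * h x) + Ifh ^ 2 * f x ^ 2 := by
          intro x; ring
        simp_rw [this]
        have hA : Integrable (fun x => I2f ^ 2 * h x ^ 2 - 2 * I2f * Ifh * (f x * h x)) ψb :=
          (hhs.const_mul _).sub (hfh.const_mul _)
        have hB : Integrable (fun x => Ifh ^ 2 * f x ^ 2) ψb := hfs.const_mul _
        rw [integral_add hA hB, integral_sub (hhs.const_mul _) (hfh.const_mul _),
          integral_const_mul, integral_const_mul, integral_const_mul]
      rw [hsplit] at hexp
      nlinarith [hfpos]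
    rw [hfa, div_le_iff₀ hfpos]
    calc Ifh ^ 2 ≤ I2f * I2h := hcs
    _ = I2h * I2f := mul_comm _ _
  -- part 2 data: value at h
  have hha : ∫ x, h x ∂ψa = I2h := by
    rw [key h, hI2h]
    have : ∀ x, g x * h x = h x ^ 2 + h x := by
      intro x; simp only [hh]; ring
    simp_rw [this]
    rw [integral_add hhs hhint, hint_h, add_zero]
  have part2 : 0 < I2h → (∫ x, h x ∂ψa) ^ 2 / I2h = I2h := by
    intro hpos
    rw [hha, sq, mul_div_assoc, div_self (ne_of_gt hpos), mul_one]
  refine ⟨part1, part2, ?_⟩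
  congr 1
  -- sSup part
  set S := {r : ℝ | ∃ f : E → ℝ, Measurable f ∧
        (∫ x, f x ∂ψb = 0) ∧ Integrable f ψa ∧ MemLp f 2 ψb ∧
        (0 < ∫ x, (f x) ^ 2 ∂ψb) ∧
        r = (∫ x, f x ∂ψa) ^ 2 / ∫ x, (f x) ^ 2 ∂ψb} with hS
  have hub : ∀ r ∈ S, r ≤ I2h := by
    rintro r ⟨f, hmf, hf0, hfa, hfL2, hfpos, rfl⟩
    exact part1 f hmf hf0 hfa hfL2 hfpos
  have hle : sSup S ≤ I2h := Real.sSup_le hub hI2h_nonneg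
  rcases eq_or_lt_of_le hI2h_nonneg with hzero | hpos
  · have hge : 0 ≤ sSup S := Real.sSup_nonneg (by
      rintro r ⟨f, _, _, _, _, hfpos, rfl⟩
      exact div_nonneg (sq_nonneg _) hfpos.le)
    rw [← hzero] at hle ⊢
    exact le_antisymm hle hge
  · -- h witnesses membership
    have hmemb : I2h ∈ S := by
      refine ⟨h, hgmeas.sub measurable_const, hint_h, ?_, hhL2, hpos, (part2 hpos).symm⟩
      · -- Integrable h ψa
        rw [← integrable_rnDeriv_smul_iff hac]
        have : (fun x => ((ψa.rnDeriv ψb) x).toReal • h x) = fun x => h x ^ 2 + h x := by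
          funext x
          have hgx : (ψa.rnDeriv ψb x).toReal = g x := by rw [hg]
          simp only [smul_eq_mul, hgx, hh]
          ring
        rw [this]
        exact hhs.add hhint
    exact le_antisymm hle (le_csSup ⟨I2h, hub⟩ hmemb)
end

section
/- Let ψ_a and ψ_b be probability measures on a measurable space (E,ℬ) with ψ_a absolutely continuous with respect to ψ_b and g = dψ_a/dψ_b ∈ L²(ψ_b). Then sup{ ∫ f dψ_a − ½ ∫ f² dψ_b : f ∈ L²(ψ_b), ∫ f dψ_b = 0, ∫ |f| dψ_a < ∞ } = ½ ∫ (g − 1)² dψ_b; i.e., the quadratic variational expression equals D̂(ψ_a‖ψ_b). -/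
open MeasureTheory

lemma mul_integrable_of_memL2 {α : Type*} [MeasurableSpace α] {μ : Measure α} {f g : α → ℝ}
    (hf : MemLp f 2 μ) (hg : MemLp g 2 μ) : Integrable (fun x => f x * g x) μ := by
  have h1 : Integrable (fun x => ((f x + g x) ^ 2 - f x ^ 2 - g x ^ 2) / 2) μ :=
    (((hf.add hg).integrable_sq.sub hf.integrable_sq).sub hg.integrable_sq).div_const 2
  exact h1.congr (Filter.Eventually.of_forall fun x => by ring)

/-- The quadratic variational formula: for `g = dψ_a/dψ_b ∈ L²(ψ_b)`,
`sup { ψ_a(f) − ½ ψ_b(f²) : ψ_b(f) = 0 } = ½ ψ_b((g−1)²) = D̂(ψ_a‖ψ_b)`. -/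
theorem stmt12 {E : Type*} [MeasurableSpace E] (ψa ψb : Measure E)
    [IsProbabilityMeasure ψa] [IsProbabilityMeasure ψb]
    (hac : ψa ≪ ψb)
    (g : E → ℝ) (hg : g = fun x => (ψa.rnDeriv ψb x).toReal)
    (hgL2 : MemLp g 2 ψb) :
    sSup {r : ℝ | ∃ f : E → ℝ, Measurable f ∧ MemLp f 2 ψb ∧
        (∫ x, f x ∂ψb = 0) ∧ Integrable f ψa ∧
        r = (∫ x, f x ∂ψa) - (1 / 2 : ℝ) * ∫ x, (f x) ^ 2 ∂ψb}
      = (1 / 2 : ℝ) * ∫ x, (g x - 1) ^ 2 ∂ψb := by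
  have hgmeas : Measurable g := by
    rw [hg]; exact (Measure.measurable_rnDeriv _ _).ennreal_toReal
  have hgint : ∫ x, g x ∂ψb = 1 := by
    rw [hg, Measure.integral_toReal_rnDeriv hac]; simp
  -- transfer integrals over ψa to ψb
  have htrans : ∀ f : E → ℝ, ∫ x, f x ∂ψa = ∫ x, g x * f x ∂ψb := by
    intro f
    rw [← integral_rnDeriv_smul hac (f := f)]
    congr 1; ext x; rw [hg]; simp [smul_eq_mul]
  set h : E → ℝ := fun x => g x - 1 with hh
  have hhL2 : MemLp h 2 ψb := hgL2.sub (memLp_const 1)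
  have hhmeas : Measurable h := hgmeas.sub measurable_const
  have hhint0 : ∫ x, h x ∂ψb = 0 := by
    rw [hh, integral_sub (hgL2.integrable one_le_two) (integrable_const (1:ℝ)), hgint]
    simp
  have hhIa : Integrable h ψa := by
    rw [← integrable_rnDeriv_smul_iff hac]
    refine (mul_integrable_of_memL2 hgL2 hhL2).congr (Filter.Eventually.of_forall fun x => ?_)
    rw [hg]; simp [smul_eq_mul]
  -- key upper bound
  have key : ∀ f : E → ℝ, MemLp f 2 ψb → (∫ x, f x ∂ψb = 0) →
      (∫ x, f x ∂ψa) - (1 / 2 : ℝ) * ∫ x, (f x) ^ 2 ∂ψb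
        ≤ (1 / 2 : ℝ) * ∫ x, (g x - 1) ^ 2 ∂ψb := by
    intro f hfL2 hf0
    have hfg : Integrable (fun x => g x * f x) ψb := mul_integrable_of_memL2 hgL2 hfL2
    have hfb : Integrable f ψb := hfL2.integrable one_le_two
    have hfsq : Integrable (fun x => f x ^ 2) ψb := hfL2.integrable_sq
    have i1 : Integrable (fun x => g x * f x - f x) ψb := hfg.sub hfb
    have i2 : Integrable (fun x => f x ^ 2 / 2) ψb := hfsq.div_const 2
    have i3 : Integrable (fun x => g x * f x - f x - f x ^ 2 / 2) ψb := i1.sub i2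
    have i4 : Integrable (fun x => (g x - 1) ^ 2 / 2) ψb := hhL2.integrable_sq.div_const 2
    have e1 : ∫ x, (g x * f x - f x - f x ^ 2 / 2) ∂ψb
        = (∫ x, g x * f x ∂ψb) - (∫ x, f x ∂ψb) - (∫ x, f x ^ 2 ∂ψb) / 2 := by
      rw [integral_sub i1 i2, integral_sub hfg hfb, integral_div]
    have e2 : ∫ x, ((g x - 1) ^ 2 / 2) ∂ψb = (∫ x, (g x - 1) ^ 2 ∂ψb) / 2 := by
      rw [integral_div]
    have mono : ∫ x, (g x * f x - f x - f x ^ 2 / 2) ∂ψb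
        ≤ ∫ x, ((g x - 1) ^ 2 / 2) ∂ψb :=
      integral_mono i3 i4 (fun x => by nlinarith [sq_nonneg (f x - (g x - 1))])
    rw [htrans f]
    linarith
  -- value at h
  have hval : (∫ x, h x ∂ψa) - (1 / 2 : ℝ) * ∫ x, (h x) ^ 2 ∂ψb
      = (1 / 2 : ℝ) * ∫ x, (g x - 1) ^ 2 ∂ψb := by
    have h1 : ∫ x, h x ∂ψa = ∫ x, (h x ^ 2 + h x) ∂ψb := by
      rw [htrans h]
      congr 1; ext x; simp only [hh]; ring
    rw [h1, integral_add hhL2.integrable_sq (hhL2.integrable one_le_two), hhint0]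
    simp only [hh]
    ring
  set S := {r : ℝ | ∃ f : E → ℝ, Measurable f ∧ MemLp f 2 ψb ∧
        (∫ x, f x ∂ψb = 0) ∧ Integrable f ψa ∧
        r = (∫ x, f x ∂ψa) - (1 / 2 : ℝ) * ∫ x, (f x) ^ 2 ∂ψb} with hS
  have hmem : (1 / 2 : ℝ) * (∫ x, (g x - 1) ^ 2 ∂ψb) ∈ S :=
    ⟨h, hhmeas, hhL2, hhint0, hhIa, hval.symm⟩
  have hub : ∀ r ∈ S, r ≤ (1 / 2 : ℝ) * ∫ x, (g x - 1) ^ 2 ∂ψb := by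
    rintro r ⟨f, -, hfL2, hf0, -, rfl⟩
    exact key f hfL2 hf0
  exact le_antisymm (csSup_le ⟨_, hmem⟩ hub) (le_csSup ⟨_, hub⟩ hmem)
end

section
/- There exists a convex, increasing function κ: [0,∞) → [0,∞) vanishing only at the origin such that the following holds: for any measurable space (E,ℬ) and any probability measures ψ_a, ψ_b on (E,ℬ) that are mutually absolutely continuous with bounded log-likelihood ratio f* = log(dψ_a/dψ_b), one has |D̂(ψ_a‖ψ_b) − KL(ψ_a‖ψ_b)| ≤ κ(‖f*‖_∞³), where ‖f*‖_∞ denotes the essential supremum of |f*|. -/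
open MeasureTheory

/-- The quadratic approximation to relative entropy (eq. (haD) of the paper):
`D̂(ψ_a‖ψ_b) = ½ sup { ψ_a(f)²/ψ_b(f²) : ψ_b(f) = 0, ψ_a(|f|) < ∞, 0 < ψ_b(f²) < ∞ }`. -/
noncomputable def Dhat {E : Type} [MeasurableSpace E] (ψa ψb : Measure E) : ℝ :=
  (1 / 2 : ℝ) * sSup {r : ℝ | ∃ f : E → ℝ, Measurable f ∧
    (∫ x, f x ∂ψb = 0) ∧ Integrable f ψa ∧
    (0 < ∫ x, (f x) ^ 2 ∂ψb) ∧ Integrable (fun x => (f x) ^ 2) ψb ∧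
    r = (∫ x, f x ∂ψa) ^ 2 / ∫ x, (f x) ^ 2 ∂ψb}

/-- Relative entropy (Kullback–Leibler divergence) `KL(ψ_a‖ψ_b) = ∫ log(dψ_a/dψ_b) dψ_a`. -/
noncomputable def KLdiv {E : Type} [MeasurableSpace E] (ψa ψb : Measure E) : ℝ :=
  ∫ x, Real.log ((ψa.rnDeriv ψb x).toReal) ∂ψa


private lemma aux_cosh_le_exp {t : ℝ} (ht : 0 ≤ t) : Real.cosh t ≤ Real.exp t := by
  rw [Real.cosh_eq]
  have h : Real.exp (-t) ≤ Real.exp t := Real.exp_le_exp.2 (by linarith)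
  linarith

private lemma aux_mono {F : ℝ → ℝ} {F' : ℝ → ℝ}
    (hF : ∀ x, HasDerivAt F (F' x) x) (h' : ∀ x, 0 < x → 0 ≤ F' x)
    (h0 : F 0 = 0) {t : ℝ} (ht : 0 ≤ t) : 0 ≤ F t := by
  have hm : MonotoneOn F (Set.Ici (0:ℝ)) := by
    refine monotoneOn_of_deriv_nonneg (convex_Ici 0)
      (fun x _ => ((hF x).continuousAt).continuousWithinAt)
      (fun x hx => ((hF x).differentiableAt).differentiableWithinAt) (fun x hx => ?_)
    rw [(hF x).deriv]
    exact h' x (by simpa [interior_Ici] using hx)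
  have := hm (Set.self_mem_Ici) (Set.mem_Ici.2 ht) ht
  simpa [h0] using this

private lemma aux_sinh_le {t : ℝ} (ht : 0 ≤ t) : Real.sinh t ≤ t * Real.exp t := by
  have h := aux_mono (F := fun x => x * Real.exp x - Real.sinh x)
      (F' := fun x => Real.exp x + x * Real.exp x - Real.cosh x)
      (fun x => by
        have h1 : HasDerivAt (fun x : ℝ => x * Real.exp x) (1 * Real.exp x + x * Real.exp x) x :=
          (hasDerivAt_id x).mul (Real.hasDerivAt_exp x)
        exact (h1.sub (Real.hasDerivAt_sinh x)).congr_deriv (by ring))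
      (fun x hx => by
        show 0 ≤ Real.exp x + x * Real.exp x - Real.cosh x
        have := aux_cosh_le_exp hx.le
        nlinarith [Real.exp_pos x])
      (by simp) ht
  linarith

private lemma aux_cosh_le {t : ℝ} (ht : 0 ≤ t) : Real.cosh t ≤ 1 + t ^ 2 / 2 * Real.exp t := by
  have h := aux_mono (F := fun x => 1 + x ^ 2 / 2 * Real.exp x - Real.cosh x)
      (F' := fun x => x * Real.exp x + x ^ 2 / 2 * Real.exp x - Real.sinh x)
      (fun x => by
        have h1 : HasDerivAt (fun x : ℝ => x ^ 2 / 2) x x := by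
          simpa using (hasDerivAt_pow 2 x).div_const 2
        have h2 : HasDerivAt (fun x : ℝ => x ^ 2 / 2 * Real.exp x)
            (x * Real.exp x + x ^ 2 / 2 * Real.exp x) x := by
          exact (h1.mul (Real.hasDerivAt_exp x)).congr_deriv (by ring)
        exact (((hasDerivAt_const x (1:ℝ)).add h2).sub (Real.hasDerivAt_cosh x)).congr_deriv (by ring))
      (fun x hx => by
        show 0 ≤ x * Real.exp x + x ^ 2 / 2 * Real.exp x - Real.sinh x
        have := aux_sinh_le hx.le
        nlinarith [Real.exp_pos x])
      (by simp) ht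
  linarith

private lemma aux_sinh_sub {t : ℝ} (ht : 0 ≤ t) :
    Real.sinh t - t ≤ t ^ 3 / 6 * Real.exp t := by
  have h := aux_mono (F := fun x => x ^ 3 / 6 * Real.exp x + x - Real.sinh x)
      (F' := fun x => x ^ 2 / 2 * Real.exp x + x ^ 3 / 6 * Real.exp x + 1 - Real.cosh x)
      (fun x => by
        have h1 : HasDerivAt (fun x : ℝ => x ^ 3 / 6) (x ^ 2 / 2) x := by
          have := (hasDerivAt_pow 3 x).div_const 6
          exact this.congr_deriv (by norm_num; ring)
        have h2 : HasDerivAt (fun x : ℝ => x ^ 3 / 6 * Real.exp x)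
            (x ^ 2 / 2 * Real.exp x + x ^ 3 / 6 * Real.exp x) x := by
          exact (h1.mul (Real.hasDerivAt_exp x)).congr_deriv (by ring)
        exact ((h2.add (hasDerivAt_id x)).sub (Real.hasDerivAt_sinh x)).congr_deriv (by ring))
      (fun x hx => by
        show 0 ≤ x ^ 2 / 2 * Real.exp x + x ^ 3 / 6 * Real.exp x + 1 - Real.cosh x
        have := aux_cosh_le hx.le
        nlinarith [Real.exp_pos x, sq_nonneg x, pow_nonneg hx.le 3])
      (by simp) ht
  linarith

/-- Pointwise bound on `H(t) = eᵗ (sinh t − t)`. -/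
private lemma aux_absH (t : ℝ) :
    |Real.exp t * (Real.sinh t - t)| ≤ |t| ^ 3 / 6 * Real.exp (2 * |t|) := by
  have hsa : |Real.sinh t - t| = Real.sinh |t| - |t| := by
    rcases le_or_gt 0 t with h | h
    · rw [abs_of_nonneg h, abs_of_nonneg (by linarith [Real.self_le_sinh_iff.2 h])]
    · have h2 : 0 ≤ Real.sinh (-t) - (-t) := by
        linarith [Real.self_le_sinh_iff.2 (by linarith : (0:ℝ) ≤ -t)]
      rw [Real.sinh_neg] at h2
      rw [abs_of_neg h, abs_of_nonpos (by linarith)]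
      rw [Real.sinh_neg]
      ring
  rw [abs_mul, abs_of_pos (Real.exp_pos t), hsa]
  have h1 : Real.sinh |t| - |t| ≤ |t| ^ 3 / 6 * Real.exp |t| := aux_sinh_sub (abs_nonneg t)
  have h2 : Real.exp t ≤ Real.exp |t| := Real.exp_le_exp.2 (le_abs_self t)
  have h3 : 0 ≤ Real.sinh |t| - |t| := by linarith [Real.self_le_sinh_iff.2 (abs_nonneg t)]
  calc Real.exp t * (Real.sinh |t| - |t|) ≤ Real.exp |t| * (|t| ^ 3 / 6 * Real.exp |t|) := by
        apply mul_le_mul h2 h1 h3 (Real.exp_pos _).le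
    _ = |t| ^ 3 / 6 * Real.exp (2 * |t|) := by
        rw [two_mul, Real.exp_add]; ring


private lemma aux_CS {E : Type} [MeasurableSpace E] (μ : Measure E) {f h : E → ℝ}
    (hf2 : Integrable (fun x => (f x) ^ 2) μ) (hh2 : Integrable (fun x => (h x) ^ 2) μ)
    (hfh : Integrable (fun x => h x * f x) μ)
    (hB : 0 < ∫ x, (f x) ^ 2 ∂μ) :
    (∫ x, h x * f x ∂μ) ^ 2 ≤ (∫ x, (h x) ^ 2 ∂μ) * ∫ x, (f x) ^ 2 ∂μ := by
  set A := ∫ x, h x * f x ∂μ with hA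
  set B := ∫ x, (f x) ^ 2 ∂μ with hB'
  set C := ∫ x, (h x) ^ 2 ∂μ with hC
  have key : 0 ≤ ∫ x, (B * h x - A * f x) ^ 2 ∂μ := integral_nonneg fun x => sq_nonneg _
  have e1 : ∫ x, (B * h x - A * f x) ^ 2 ∂μ
      = B ^ 2 * C - (2 * A * B) * A + A ^ 2 * B := by
    rw [show (fun x => (B * h x - A * f x) ^ 2)
        = fun x => B ^ 2 * (h x) ^ 2 - (2 * A * B) * (h x * f x) + A ^ 2 * (f x) ^ 2 from
        funext fun x => by ring]
    have h1 : Integrable (fun x => B ^ 2 * (h x) ^ 2 - 2 * A * B * (h x * f x)) μ :=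
      (hh2.const_mul _).sub (hfh.const_mul _)
    have h2 : Integrable (fun x => 2 * A * B * (h x * f x)) μ := hfh.const_mul _
    have h3 : Integrable (fun x => B ^ 2 * (h x) ^ 2) μ := hh2.const_mul _
    have h4 : Integrable (fun x => A ^ 2 * (f x) ^ 2) μ := hf2.const_mul _
    rw [integral_add h1 h4, integral_sub h3 h2,
      MeasureTheory.integral_const_mul, MeasureTheory.integral_const_mul,
      MeasureTheory.integral_const_mul]
  rw [e1] at key
  nlinarith [key, hB]


private lemma kappa_mono : MonotoneOn (fun x : ℝ => x * Real.exp (2 * x)) (Set.Ici (0:ℝ)) :=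
  fun a ha b _ hab => mul_le_mul hab (Real.exp_le_exp.2 (by linarith)) (Real.exp_pos _).le
    (le_trans ha hab)

private lemma kappa_convex : ConvexOn ℝ (Set.Ici (0:ℝ)) (fun x : ℝ => x * Real.exp (2 * x)) := by
  have h1 : ConvexOn ℝ (Set.Ici (0:ℝ)) (fun x : ℝ => x) := convexOn_id (convex_Ici 0)
  have h2 : ConvexOn ℝ (Set.Ici (0:ℝ)) (fun x : ℝ => Real.exp (2 * x)) := by
    refine ⟨convex_Ici 0, fun x _ y _ a b ha hb hab => ?_⟩
    have h := convexOn_exp.2 (Set.mem_univ (2 * x)) (Set.mem_univ (2 * y)) ha hb hab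
    simp only [smul_eq_mul] at h ⊢
    convert h using 2
    ring
  have hm1 : MonotoneOn (fun x : ℝ => x) (Set.Ici (0:ℝ)) := fun a _ b _ hab => hab
  have hm2 : MonotoneOn (fun x : ℝ => Real.exp (2 * x)) (Set.Ici (0:ℝ)) :=
    fun a _ b _ hab => Real.exp_le_exp.2 (by linarith)
  have := h1.mul h2 (fun x hx => hx) (fun x _ => (Real.exp_pos _).le) (hm1.monovaryOn hm2)
  exact this

private lemma kappa_final {M : ℝ} (hM : 0 ≤ M) :
    M ^ 3 / 6 * Real.exp (2 * M) ≤ M ^ 3 * Real.exp (2 * M ^ 3) := by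
  have h1 : 2 * M - 2 * M ^ 3 ≤ 1 := by nlinarith [mul_nonneg hM (sq_nonneg (M - 3/5)), sq_nonneg (M - 17/30)]
  have h2 : Real.exp (2 * M) ≤ 6 * Real.exp (2 * M ^ 3) := by
    have : Real.exp (2 * M) = Real.exp (2 * M - 2 * M ^ 3) * Real.exp (2 * M ^ 3) := by
      rw [← Real.exp_add]; ring_nf
    rw [this]
    have h3 : Real.exp (2 * M - 2 * M ^ 3) ≤ 6 := by
      calc Real.exp (2 * M - 2 * M ^ 3) ≤ Real.exp 1 := Real.exp_le_exp.2 h1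
        _ ≤ 6 := by linarith [Real.exp_one_lt_d9.le]
    nlinarith [Real.exp_pos (2 * M ^ 3)]
  calc M ^ 3 / 6 * Real.exp (2 * M) ≤ M ^ 3 / 6 * (6 * Real.exp (2 * M ^ 3)) := by
        apply mul_le_mul_of_nonneg_left h2 (by positivity)
    _ = M ^ 3 * Real.exp (2 * M ^ 3) := by ring

private lemma aux_main {E : Type} [MeasurableSpace E] (ψa ψb : Measure E)
    (hPa : IsProbabilityMeasure ψa) (hPb : IsProbabilityMeasure ψb)
    (hab : ψa ≪ ψb) (hba : ψb ≪ ψa)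
    (hne : eLpNormEssSup (fun x => Real.log ((ψa.rnDeriv ψb x).toReal)) ψb ≠ ⊤) :
    |Dhat ψa ψb - KLdiv ψa ψb| ≤
      (eLpNormEssSup (fun x => Real.log ((ψa.rnDeriv ψb x).toReal)) ψb).toReal ^ 3 / 6 *
        Real.exp (2 * (eLpNormEssSup
          (fun x => Real.log ((ψa.rnDeriv ψb x).toReal)) ψb).toReal) := by
  set M := (eLpNormEssSup (fun x => Real.log ((ψa.rnDeriv ψb x).toReal)) ψb).toReal with hMdef
  have hM0 : 0 ≤ M := ENNReal.toReal_nonneg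
  have hmg : Measurable fun x => (ψa.rnDeriv ψb x).toReal :=
    (Measure.measurable_rnDeriv ψa ψb).ennreal_toReal
  set g : E → ℝ := fun x => (ψa.rnDeriv ψb x).toReal with hgdef
  set T : E → ℝ := fun x => Real.log (g x) with hTdef
  have hmT : Measurable T := hmg.log
  -- a.e. facts
  have hTM : ∀ᵐ x ∂ψb, |T x| ≤ M := by
    filter_upwards [ae_le_eLpNormEssSup
      (μ := ψb) (f := fun x => Real.log ((ψa.rnDeriv ψb x).toReal))] with x hx
    have h2 := ENNReal.toReal_mono hne hx
    simpa [Real.norm_eq_abs] using h2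
  have hge : ∀ᵐ x ∂ψb, Real.exp (T x) = g x := by
    filter_upwards [(Measure.rnDeriv_pos hab).filter_mono hba.ae_le,
      Measure.rnDeriv_lt_top ψa ψb] with x h1 h2
    exact Real.exp_log (ENNReal.toReal_pos h1.ne' h2.ne)
  have hgb : ∀ᵐ x ∂ψb, |g x| ≤ Real.exp M := by
    filter_upwards [hge, hTM] with x h1 h2
    rw [← h1, abs_of_pos (Real.exp_pos _)]
    exact Real.exp_le_exp.2 (le_trans (le_abs_self _) h2)
  -- integrability of g and h := g - 1
  have hgint : Integrable g ψb :=
    (integrable_const (Real.exp M)).mono' hmg.aestronglyMeasurable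
      (by simpa [Real.norm_eq_abs] using hgb)
  have hhm : Measurable fun x => g x - 1 := hmg.sub measurable_const
  have hhint : Integrable (fun x => g x - 1) ψb := hgint.sub (integrable_const 1)
  have hh2int : Integrable (fun x => (g x - 1) ^ 2) ψb := by
    refine (integrable_const ((Real.exp M + 1) ^ 2)).mono'
      (hhm.pow_const 2).aestronglyMeasurable ?_
    filter_upwards [hgb] with x hx
    rw [Real.norm_eq_abs, abs_of_nonneg (sq_nonneg _), ← sq_abs]
    have h1 : |g x - 1| ≤ Real.exp M + 1 := (abs_sub _ _).trans (by simp; linarith)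
    exact pow_le_pow_left₀ (abs_nonneg _) h1 2
  have hg1 : ∫ x, g x ∂ψb = 1 := by
    have := Measure.integral_toReal_rnDeriv hab
    simpa using this
  have hh0 : ∫ x, (g x - 1) ∂ψb = 0 := by
    rw [integral_sub hgint (integrable_const 1)]
    simp [hg1]
  have hC0 : 0 ≤ ∫ x, (g x - 1) ^ 2 ∂ψb := integral_nonneg fun x => sq_nonneg _
  -- transfer of integrals
  have htrans : ∀ f : E → ℝ, ∫ x, f x ∂ψa = ∫ x, g x * f x ∂ψb := by
    intro f
    have := integral_rnDeriv_smul (μ := ψa) (ν := ψb) hab (f := f)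
    simpa [smul_eq_mul] using this.symm
  -- Dhat = C/2
  have hub : ∀ r ∈ {r : ℝ | ∃ f : E → ℝ, Measurable f ∧ (∫ x, f x ∂ψb = 0) ∧
      Integrable f ψa ∧ (0 < ∫ x, (f x) ^ 2 ∂ψb) ∧ Integrable (fun x => (f x) ^ 2) ψb ∧
      r = (∫ x, f x ∂ψa) ^ 2 / ∫ x, (f x) ^ 2 ∂ψb},
      r ≤ ∫ x, (g x - 1) ^ 2 ∂ψb := by
    rintro r ⟨f, hfm, hfb0, hfa, hf2pos, hf2int, rfl⟩
    have hfbint : Integrable f ψb := by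
      refine (((integrable_const (1:ℝ)).add hf2int).div_const 2).mono'
        hfm.aestronglyMeasurable ?_
      refine Filter.Eventually.of_forall fun x => ?_
      show ‖f x‖ ≤ (1 + (f x) ^ 2) / 2
      rw [Real.norm_eq_abs]
      nlinarith [sq_nonneg (|f x| - 1), sq_abs (f x)]
    have hgfint : Integrable (fun x => g x * f x) ψb := by
      have := (integrable_rnDeriv_smul_iff (μ := ψa) (ν := ψb) hab (f := f)).2 hfa
      simpa [smul_eq_mul] using this
    have hhfint : Integrable (fun x => (g x - 1) * f x) ψb := by
      have he : (fun x => (g x - 1) * f x) = fun x => g x * f x - f x :=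
        funext fun x => by ring
      rw [he]; exact hgfint.sub hfbint
    have hEq : ∫ x, f x ∂ψa = ∫ x, (g x - 1) * f x ∂ψb := by
      rw [htrans f,
        show (fun x => (g x - 1) * f x) = fun x => g x * f x - f x from funext fun x => by ring,
        integral_sub hgfint hfbint, hfb0, sub_zero]
    rw [hEq, div_le_iff₀ hf2pos]
    exact aux_CS ψb hf2int hh2int hhfint hf2pos
  have hDhat : Dhat ψa ψb = 1 / 2 * ∫ x, (g x - 1) ^ 2 ∂ψb := by
    unfold Dhat
    congr 1
    refine le_antisymm (Real.sSup_le hub hC0) ?_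
    rcases eq_or_lt_of_le hC0 with hC | hC
    · rw [← hC]
      exact Real.sSup_nonneg fun r hr => by
        obtain ⟨f, _, _, _, hf2pos, _, rfl⟩ := hr
        exact div_nonneg (sq_nonneg _) hf2pos.le
    · refine le_csSup ⟨_, hub⟩ ?_
      have hgba : ∀ᵐ x ∂ψa, |g x - 1| ≤ Real.exp M + 1 := by
        refine Filter.Eventually.filter_mono hab.ae_le ?_
        filter_upwards [hgb] with x hx
        exact (abs_sub _ _).trans (by simp; linarith)
      have hhinta : Integrable (fun x => g x - 1) ψa :=
        (integrable_const (Real.exp M + 1)).mono' hhm.aestronglyMeasurable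
          (by simpa [Real.norm_eq_abs] using hgba)
      have hialt : ∫ x, (g x - 1) ∂ψa = ∫ x, (g x - 1) ^ 2 ∂ψb := by
        rw [htrans (fun x => g x - 1),
          show (fun x => g x * (g x - 1)) = fun x => (g x - 1) ^ 2 + (g x - 1) from
            funext fun x => by ring,
          integral_add hh2int hhint, hh0, add_zero]
      refine ⟨fun x => g x - 1, hhm, hh0, hhinta, hC, hh2int, ?_⟩
      rw [hialt, sq, mul_div_assoc, div_self (ne_of_gt hC), mul_one]
  -- KL computation
  have hHm : Measurable (fun x => Real.exp (T x) * (Real.sinh (T x) - T x)) :=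
    hmT.exp.mul (hmT.sinh.sub hmT)
  have hHb : ∀ᵐ x ∂ψb, ‖Real.exp (T x) * (Real.sinh (T x) - T x)‖ ≤
      M ^ 3 / 6 * Real.exp (2 * M) := by
    filter_upwards [hTM] with x hx
    rw [Real.norm_eq_abs]
    refine (aux_absH (T x)).trans ?_
    have h1 : |T x| ^ 3 ≤ M ^ 3 := pow_le_pow_left₀ (abs_nonneg _) hx 3
    have h2 : Real.exp (2 * |T x|) ≤ Real.exp (2 * M) := Real.exp_le_exp.2 (by linarith)
    exact mul_le_mul (by linarith) h2 (Real.exp_pos _).le (by positivity)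
  have hHint : Integrable (fun x => Real.exp (T x) * (Real.sinh (T x) - T x)) ψb :=
    (integrable_const _).mono' hHm.aestronglyMeasurable hHb
  have hKL : KLdiv ψa ψb = (∫ x, (g x - 1) ^ 2 ∂ψb) / 2 -
      ∫ x, Real.exp (T x) * (Real.sinh (T x) - T x) ∂ψb := by
    have h1 : KLdiv ψa ψb = ∫ x, g x * T x ∂ψb := htrans T
    have hptwise : ∀ᵐ x ∂ψb, g x * T x =
        (g x - 1) ^ 2 / 2 + (g x - 1) - Real.exp (T x) * (Real.sinh (T x) - T x) := by
      filter_upwards [hge] with x hx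
      rw [← hx, Real.sinh_eq, Real.exp_neg]
      have hexp : Real.exp (T x) ≠ 0 := Real.exp_ne_zero (T x)
      field_simp
      ring
    have hint2 : Integrable (fun x => (g x - 1) ^ 2 / 2) ψb := hh2int.div_const 2
    have hint1 : Integrable (fun x => (g x - 1) ^ 2 / 2 + (g x - 1)) ψb := hint2.add hhint
    rw [h1, integral_congr_ae hptwise, integral_sub hint1 hHint,
      integral_add hint2 hhint, hh0, add_zero, integral_div]
  rw [hDhat, hKL]
  have heq : 1 / 2 * (∫ x, (g x - 1) ^ 2 ∂ψb) -
      ((∫ x, (g x - 1) ^ 2 ∂ψb) / 2 - ∫ x, Real.exp (T x) * (Real.sinh (T x) - T x) ∂ψb)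
      = ∫ x, Real.exp (T x) * (Real.sinh (T x) - T x) ∂ψb := by ring
  rw [heq]
  have := norm_integral_le_of_norm_le_const (μ := ψb) hHb
  simpa [Real.norm_eq_abs] using this

/-- There is a convex, increasing function `κ` vanishing only at the origin such that for
all mutually absolutely continuous probability measures with bounded log-likelihood ratio
`f* = log(dψ_a/dψ_b)`, `|D̂(ψ_a‖ψ_b) − KL(ψ_a‖ψ_b)| ≤ κ(‖f*‖_∞³)`. -/
theorem stmt14 :
    ∃ κ : ℝ → ℝ, ConvexOn ℝ (Set.Ici (0 : ℝ)) κ ∧ MonotoneOn κ (Set.Ici (0 : ℝ)) ∧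
      κ 0 = 0 ∧ (∀ x : ℝ, 0 < x → 0 < κ x) ∧
      ∀ (E : Type) (_ : MeasurableSpace E) (ψa ψb : Measure E),
        IsProbabilityMeasure ψa → IsProbabilityMeasure ψb →
        ψa ≪ ψb → ψb ≪ ψa →
        eLpNormEssSup (fun x => Real.log ((ψa.rnDeriv ψb x).toReal)) ψb ≠ ⊤ →
        |Dhat ψa ψb - KLdiv ψa ψb| ≤
          κ ((eLpNormEssSup
              (fun x => Real.log ((ψa.rnDeriv ψb x).toReal)) ψb).toReal ^ 3) := by
  refine ⟨fun x => x * Real.exp (2 * x), kappa_convex, kappa_mono, by simp,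
    fun x hx => by positivity, ?_⟩
  intro E mE ψa ψb hPa hPb hab hba hne
  refine (aux_main ψa ψb hPa hPb hab hba hne).trans ?_
  exact kappa_final ENNReal.toReal_nonneg
end
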